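/- Let A and B be Hopf algebras, H = A ⊗ B their tensor product Hopf algebra, and Φ ∈ A ⊗ B, regarded as an element of H ⊗ H via the embedding a⊗b ↦ (a⊗1)⊗(1⊗b). Suppose Φ is invertible and satisfies the factorization conditions (Δ_A ⊗ id_B)(Φ) = Φ₁₃Φ₂₃ in A⊗A⊗B and (id_A ⊗ Δ_B)(Φ) = Φ₁₃Φ₁₂ in A⊗B⊗B, together with (ε_A⊗id)(Φ) = 1 and (id⊗ε_B)(Φ) = 1. Then Φ satisfies the twist equation (Δ_H ⊗ id)(Φ)·(Φ ⊗ 1) = (id ⊗ Δ_H)(Φ)·(1 ⊗ Φ) in H⊗H⊗H, and the normalization (ε_H ⊗ id)(Φ) = 1 = (id ⊗ ε_H)(Φ). -/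

import Mathlib

open TensorProduct

universe u

set_option maxHeartbeats 2000000
set_option synthInstance.maxHeartbeats 400000

noncomputable section TwistAux

variable {k A B : Type u} [Field k] [Ring A] [Ring B] [HopfAlgebra k A] [HopfAlgebra k B]

/-- `a ⊗ b ↦ (a ⊗ 1) ⊗ (1 ⊗ b)` as an algebra hom. -/
def twistIota : A ⊗[k] B →ₐ[k] (A ⊗[k] B) ⊗[k] (A ⊗[k] B) :=
  Algebra.TensorProduct.map
    (Algebra.TensorProduct.includeLeft : A →ₐ[k] A ⊗[k] B)
    (Algebra.TensorProduct.includeRight : B →ₐ[k] A ⊗[k] B)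

lemma twistIota_apply (x : A ⊗[k] B) :
    twistIota x =
      (TensorProduct.map
        (Algebra.TensorProduct.includeLeft : A →ₐ[k] A ⊗[k] B).toLinearMap
        (Algebra.TensorProduct.includeRight : B →ₐ[k] A ⊗[k] B).toLinearMap) x := rfl

lemma comul_tmul_one (a : A) :
    Coalgebra.comul (R := k) (a ⊗ₜ[k] (1 : B)) =
      TensorProduct.map
        (Algebra.TensorProduct.includeLeft : A →ₐ[k] A ⊗[k] B).toLinearMap
        (Algebra.TensorProduct.includeLeft : A →ₐ[k] A ⊗[k] B).toLinearMap
        (Coalgebra.comul a) := by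
  have h1 : Coalgebra.comul (R := k) (1 : B) = (1 : B) ⊗ₜ[k] (1 : B) := by
    rw [Bialgebra.comul_one, Algebra.TensorProduct.one_def]
  simp only [TensorProduct.comul_def, LinearMap.comp_apply, TensorProduct.AlgebraTensorModule.map_tmul,
    TensorProduct.map_tmul, LinearMap.id_apply, h1]
  induction Coalgebra.comul (R := k) a using TensorProduct.induction_on with
  | zero =>
      rw [zero_tmul]
      exact ((tensorTensorTensorComm k A A B B).map_zero).trans (LinearMap.map_zero _).symm
  | tmul x z => simp
  | add u v hu hv => rw [add_tmul, map_add, map_add, hu, hv]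

lemma comul_one_tmul (b : B) :
    Coalgebra.comul (R := k) ((1 : A) ⊗ₜ[k] b) =
      TensorProduct.map
        (Algebra.TensorProduct.includeRight : B →ₐ[k] A ⊗[k] B).toLinearMap
        (Algebra.TensorProduct.includeRight : B →ₐ[k] A ⊗[k] B).toLinearMap
        (Coalgebra.comul b) := by
  have h1 : Coalgebra.comul (R := k) (1 : A) = (1 : A) ⊗ₜ[k] (1 : A) := by
    rw [Bialgebra.comul_one, Algebra.TensorProduct.one_def]
  simp only [TensorProduct.comul_def, LinearMap.comp_apply, TensorProduct.AlgebraTensorModule.map_tmul,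
    TensorProduct.map_tmul, LinearMap.id_apply, h1]
  induction Coalgebra.comul (R := k) b using TensorProduct.induction_on with
  | zero =>
      rw [tmul_zero]
      exact ((tensorTensorTensorComm k A A B B).map_zero).trans (LinearMap.map_zero _).symm
  | tmul x z => simp
  | add u v hu hv => rw [tmul_add, map_add, map_add, hu, hv]

/-- the leg embedding `a ⊗ b ↦ (a⊗1) ⊗ ((1⊗b) ⊗ 1)`. -/
def twistE12 : A ⊗[k] B →ₐ[k] (A ⊗[k] B) ⊗[k] ((A ⊗[k] B) ⊗[k] (A ⊗[k] B)) :=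
  Algebra.TensorProduct.map
    (Algebra.TensorProduct.includeLeft : A →ₐ[k] A ⊗[k] B)
    ((Algebra.TensorProduct.includeLeft :
        (A ⊗[k] B) →ₐ[k] (A ⊗[k] B) ⊗[k] (A ⊗[k] B)).comp
      (Algebra.TensorProduct.includeRight : B →ₐ[k] A ⊗[k] B))

/-- the leg embedding `a ⊗ b ↦ (a⊗1) ⊗ (1 ⊗ (1⊗b))`. -/
def twistE13 : A ⊗[k] B →ₐ[k] (A ⊗[k] B) ⊗[k] ((A ⊗[k] B) ⊗[k] (A ⊗[k] B)) :=
  Algebra.TensorProduct.map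
    (Algebra.TensorProduct.includeLeft : A →ₐ[k] A ⊗[k] B)
    ((Algebra.TensorProduct.includeRight :
        (A ⊗[k] B) →ₐ[k] (A ⊗[k] B) ⊗[k] (A ⊗[k] B)).comp
      (Algebra.TensorProduct.includeRight : B →ₐ[k] A ⊗[k] B))

/-- the leg embedding `a ⊗ b ↦ 1 ⊗ ((a⊗1) ⊗ (1⊗b))`. -/
def twistE23 : A ⊗[k] B →ₐ[k] (A ⊗[k] B) ⊗[k] ((A ⊗[k] B) ⊗[k] (A ⊗[k] B)) :=
  (Algebra.TensorProduct.includeRight :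
      ((A ⊗[k] B) ⊗[k] (A ⊗[k] B)) →ₐ[k] (A ⊗[k] B) ⊗[k] ((A ⊗[k] B) ⊗[k] (A ⊗[k] B))).comp
    twistIota

def twistM : A ⊗[k] (A ⊗[k] B) →ₐ[k] (A ⊗[k] B) ⊗[k] ((A ⊗[k] B) ⊗[k] (A ⊗[k] B)) :=
  Algebra.TensorProduct.map
    (Algebra.TensorProduct.includeLeft : A →ₐ[k] A ⊗[k] B) twistIota

def twistN : (A ⊗[k] B) ⊗[k] B →ₐ[k] (A ⊗[k] B) ⊗[k] ((A ⊗[k] B) ⊗[k] (A ⊗[k] B)) :=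
  (Algebra.TensorProduct.assoc k k k (A ⊗[k] B) (A ⊗[k] B) (A ⊗[k] B)).toAlgHom.comp
    (Algebra.TensorProduct.map twistIota
      (Algebra.TensorProduct.includeRight : B →ₐ[k] A ⊗[k] B))

lemma twist_claim1 (x : A ⊗[k] B) :
    (Algebra.TensorProduct.assoc k k k (A ⊗[k] B) (A ⊗[k] B) (A ⊗[k] B))
        ((Algebra.TensorProduct.map (Bialgebra.comulAlgHom k (A ⊗[k] B))
          (AlgHom.id k (A ⊗[k] B))) (twistIota x)) =
      twistM ((TensorProduct.assoc k A A B)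
        ((TensorProduct.map (Coalgebra.comul : A →ₗ[k] A ⊗[k] A) LinearMap.id) x)) := by
  induction x using TensorProduct.induction_on with
  | zero => simp [twistIota, twistM]
  | add u v hu hv => simp only [map_add, hu, hv]
  | tmul a b =>
      simp only [twistIota, Algebra.TensorProduct.map_tmul,
        Algebra.TensorProduct.includeLeft_apply, Algebra.TensorProduct.includeRight_apply,
        Bialgebra.comulAlgHom_apply, AlgHom.coe_id, id_eq, TensorProduct.map_tmul,
        LinearMap.id_apply, comul_tmul_one]
      induction Coalgebra.comul (R := k) a using TensorProduct.induction_on with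
      | zero => simp
      | add u v hu hv =>
          rw [map_add, add_tmul, map_add]
          rw [add_tmul, map_add, map_add, hu, hv]
      | tmul x y =>
          simp [twistM, twistIota]

lemma twist_claim2 (x : A ⊗[k] B) :
    (Algebra.TensorProduct.assoc k k k (A ⊗[k] B) (A ⊗[k] B) (A ⊗[k] B))
        (twistIota x ⊗ₜ[k] (1 : A ⊗[k] B)) = twistE12 x := by
  induction x using TensorProduct.induction_on with
  | zero => simp [twistIota, twistE12]
  | add u v hu hv =>
      rw [map_add, add_tmul, map_add, hu, hv, map_add]
  | tmul a b => simp [twistIota, twistE12]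

lemma twist_claim3 (x : A ⊗[k] B) :
    twistM ((TensorProduct.map (LinearMap.id : A →ₗ[k] A)
      (Algebra.TensorProduct.includeRight : B →ₐ[k] A ⊗[k] B).toLinearMap) x) =
    twistE13 x := by
  induction x using TensorProduct.induction_on with
  | zero => simp
  | add u v hu hv => rw [map_add, map_add, hu, hv, map_add]
  | tmul a b => simp [twistM, twistIota, twistE13, Algebra.TensorProduct.one_def]

lemma twist_claim4 (x : A ⊗[k] B) :
    twistM ((1 : A) ⊗ₜ[k] x) = twistE23 x := by
  simp [twistM, twistE23, Algebra.TensorProduct.includeRight_apply, Algebra.TensorProduct.one_def]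

lemma twist_claim5 (x : A ⊗[k] B) :
    (Algebra.TensorProduct.map (AlgHom.id k (A ⊗[k] B))
        (Bialgebra.comulAlgHom k (A ⊗[k] B))) (twistIota x) =
      twistN ((TensorProduct.assoc k A B B).symm
        ((TensorProduct.map LinearMap.id (Coalgebra.comul : B →ₗ[k] B ⊗[k] B)) x)) := by
  induction x using TensorProduct.induction_on with
  | zero => simp [twistIota, twistN]
  | add u v hu hv => simp only [map_add, hu, hv]
  | tmul a b =>
      simp only [twistIota, Algebra.TensorProduct.map_tmul,
        Algebra.TensorProduct.includeLeft_apply, Algebra.TensorProduct.includeRight_apply,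
        Bialgebra.comulAlgHom_apply, AlgHom.coe_id, id_eq, TensorProduct.map_tmul,
        LinearMap.id_apply, comul_one_tmul]
      induction Coalgebra.comul (R := k) b using TensorProduct.induction_on with
      | zero => simp
      | add u v hu hv =>
          rw [map_add, tmul_add, tmul_add, map_add, map_add, hu, hv]
      | tmul x y =>
          simp [twistN, twistIota]

lemma twist_claim6 (x : A ⊗[k] B) :
    twistN ((TensorProduct.map
        (Algebra.TensorProduct.includeLeft : A →ₐ[k] A ⊗[k] B).toLinearMap
        (LinearMap.id : B →ₗ[k] B)) x) = twistE13 x := by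
  induction x using TensorProduct.induction_on with
  | zero => simp
  | add u v hu hv => rw [map_add, map_add, hu, hv, map_add]
  | tmul a b => simp [twistN, twistIota, twistE13, Algebra.TensorProduct.one_def]

lemma twist_claim7 (x : A ⊗[k] B) :
    twistN (x ⊗ₜ[k] (1 : B)) = twistE12 x := by
  rw [← twist_claim2 x]
  simp [twistN, Algebra.TensorProduct.one_def]

lemma twist_claim8 (x : A ⊗[k] B) :
    (1 : A ⊗[k] B) ⊗ₜ[k] twistIota x = twistE23 x := by
  simp [twistE23, Algebra.TensorProduct.includeRight_apply]

private lemma twist_add_mul (u v w : (A ⊗[k] B) ⊗[k] ((A ⊗[k] B) ⊗[k] (A ⊗[k] B))) :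
    (u + v) * w = u * w + v * w := by
  have := LinearMap.congr_fun
    (map_add (LinearMap.mul k ((A ⊗[k] B) ⊗[k] ((A ⊗[k] B) ⊗[k] (A ⊗[k] B)))) u v) w
  simp only [LinearMap.add_apply, LinearMap.mul_apply'] at this
  exact this

private lemma twist_mul_add (u v w : (A ⊗[k] B) ⊗[k] ((A ⊗[k] B) ⊗[k] (A ⊗[k] B))) :
    u * (v + w) = u * v + u * w := by
  have := map_add (LinearMap.mul k ((A ⊗[k] B) ⊗[k] ((A ⊗[k] B) ⊗[k] (A ⊗[k] B))) u) v w
  simp only [LinearMap.mul_apply'] at this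
  exact this

private lemma twist_zero_mul (w : (A ⊗[k] B) ⊗[k] ((A ⊗[k] B) ⊗[k] (A ⊗[k] B))) :
    (0 : (A ⊗[k] B) ⊗[k] ((A ⊗[k] B) ⊗[k] (A ⊗[k] B))) * w = 0 := by
  have := LinearMap.congr_fun
    ((LinearMap.mul k ((A ⊗[k] B) ⊗[k] ((A ⊗[k] B) ⊗[k] (A ⊗[k] B)))).map_zero) w
  simp only [LinearMap.zero_apply, LinearMap.mul_apply'] at this
  exact this

private lemma twist_mul_zero (w : (A ⊗[k] B) ⊗[k] ((A ⊗[k] B) ⊗[k] (A ⊗[k] B))) :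
    w * (0 : (A ⊗[k] B) ⊗[k] ((A ⊗[k] B) ⊗[k] (A ⊗[k] B))) = 0 := by
  have := (LinearMap.mul k ((A ⊗[k] B) ⊗[k] ((A ⊗[k] B) ⊗[k] (A ⊗[k] B))) w).map_zero
  simp only [LinearMap.mul_apply'] at this
  exact this

lemma twist_comm (x y : A ⊗[k] B) :
    twistE12 x * twistE23 y = twistE23 y * twistE12 x := by
  induction x using TensorProduct.induction_on with
  | zero => rw [map_zero, twist_zero_mul, twist_mul_zero]
  | add u v hu hv => rw [map_add, twist_add_mul, twist_mul_add, hu, hv]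
  | tmul a b =>
      induction y using TensorProduct.induction_on with
      | zero => rw [map_zero, twist_zero_mul, twist_mul_zero]
      | add u v hu hv => rw [map_add, twist_mul_add, twist_add_mul, hu, hv]
      | tmul a' b' =>
          simp [twistE12, twistE23, twistIota, Algebra.TensorProduct.tmul_mul_tmul]

lemma twist_counit_left (x : A ⊗[k] B) :
    (TensorProduct.lid k (A ⊗[k] B))
        ((TensorProduct.map (Coalgebra.counit : A ⊗[k] B →ₗ[k] k) LinearMap.id)
          (twistIota x)) =
      (Algebra.TensorProduct.includeRight : B →ₐ[k] A ⊗[k] B)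
        ((TensorProduct.lid k B)
          ((TensorProduct.map (Coalgebra.counit : A →ₗ[k] k) LinearMap.id) x)) := by
  induction x using TensorProduct.induction_on with
  | zero => simp
  | add u v hu hv => simp only [map_add, hu, hv]
  | tmul a b =>
      simp [twistIota, TensorProduct.counit_def, LinearMap.mul'_apply,
        Algebra.TensorProduct.includeRight_apply, tmul_smul]

lemma twist_counit_right (x : A ⊗[k] B) :
    (TensorProduct.rid k (A ⊗[k] B))
        ((TensorProduct.map LinearMap.id (Coalgebra.counit : A ⊗[k] B →ₗ[k] k))
          (twistIota x)) =
      (Algebra.TensorProduct.includeLeft : A →ₐ[k] A ⊗[k] B)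
        ((TensorProduct.rid k A)
          ((TensorProduct.map LinearMap.id (Coalgebra.counit : B →ₗ[k] k)) x)) := by
  induction x using TensorProduct.induction_on with
  | zero => simp
  | add u v hu hv => simp only [map_add, hu, hv]
  | tmul a b =>
      simp [twistIota, TensorProduct.counit_def, LinearMap.mul'_apply,
        Algebra.TensorProduct.includeLeft_apply, smul_tmul']

end TwistAux
/-- twisted tensor product.  If `A, B` are Hopf algebras,
`H = A ⊗ B` their tensor product Hopf algebra, and `φ ∈ A ⊗ B` is invertible
and satisfies the factorization conditions
`(Δ_A ⊗ id)(φ) = φ₁₃φ₂₃` and `(id ⊗ Δ_B)(φ) = φ₁₃φ₁₂`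
together with `(ε_A ⊗ id)(φ) = 1` and `(id ⊗ ε_B)(φ) = 1`, then the image `Φ`
of `φ` in `H ⊗ H` under `a ⊗ b ↦ (a ⊗ 1) ⊗ (1 ⊗ b)` satisfies the twist
equation and the normalization for `H`. -/
theorem twisted_tensor_product_isTwist
    {k A B : Type u} [Field k] [Ring A] [Ring B] [HopfAlgebra k A] [HopfAlgebra k B]
    (φ : (A ⊗[k] B)ˣ)
    -- `(Δ_A ⊗ id_B)(φ) = φ₁₃ φ₂₃` in `A ⊗ (A ⊗ B)`:
    (hfacA :
      (TensorProduct.assoc k A A B)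
          ((TensorProduct.map (Coalgebra.comul : A →ₗ[k] A ⊗[k] A) LinearMap.id)
            (φ : A ⊗[k] B)) =
        (TensorProduct.map (LinearMap.id : A →ₗ[k] A)
            (Algebra.TensorProduct.includeRight : B →ₐ[k] A ⊗[k] B).toLinearMap)
            (φ : A ⊗[k] B) *
          ((1 : A) ⊗ₜ[k] (φ : A ⊗[k] B)))
    -- `(id_A ⊗ Δ_B)(φ) = φ₁₃ φ₁₂` in `(A ⊗ B) ⊗ B`:
    (hfacB :
      (TensorProduct.assoc k A B B).symm
          ((TensorProduct.map LinearMap.id (Coalgebra.comul : B →ₗ[k] B ⊗[k] B))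
            (φ : A ⊗[k] B)) =
        (TensorProduct.map
            (Algebra.TensorProduct.includeLeft : A →ₐ[k] A ⊗[k] B).toLinearMap
            (LinearMap.id : B →ₗ[k] B)) (φ : A ⊗[k] B) *
          ((φ : A ⊗[k] B) ⊗ₜ[k] (1 : B)))
    -- `(ε_A ⊗ id)(φ) = 1` and `(id ⊗ ε_B)(φ) = 1`:
    (hnormA :
      (TensorProduct.lid k B)
        ((TensorProduct.map (Coalgebra.counit : A →ₗ[k] k) LinearMap.id)
          (φ : A ⊗[k] B)) = 1)
    (hnormB :
      (TensorProduct.rid k A)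
        ((TensorProduct.map LinearMap.id (Coalgebra.counit : B →ₗ[k] k))
          (φ : A ⊗[k] B)) = 1) :
    -- conclusion, about `Φ := Σ (a ⊗ 1) ⊗ (1 ⊗ b) ∈ H ⊗ H`, `H = A ⊗ B`:
    let H := A ⊗[k] B
    let Φ : H ⊗[k] H :=
      (TensorProduct.map
        (Algebra.TensorProduct.includeLeft : A →ₐ[k] A ⊗[k] B).toLinearMap
        (Algebra.TensorProduct.includeRight : B →ₐ[k] A ⊗[k] B).toLinearMap)
        (φ : A ⊗[k] B)
    ((Algebra.TensorProduct.assoc k k k H H H)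
        ((Algebra.TensorProduct.map (Bialgebra.comulAlgHom k H) (AlgHom.id k H)) Φ *
          (Φ ⊗ₜ[k] (1 : H)))
      = (Algebra.TensorProduct.map (AlgHom.id k H) (Bialgebra.comulAlgHom k H)) Φ *
          ((1 : H) ⊗ₜ[k] Φ)) ∧
    (TensorProduct.lid k H)
        ((TensorProduct.map (Coalgebra.counit : H →ₗ[k] k) LinearMap.id) Φ) = 1 ∧
    (TensorProduct.rid k H)
        ((TensorProduct.map LinearMap.id (Coalgebra.counit : H →ₗ[k] k)) Φ) = 1 := by
  
  intro H Φ
  refine ⟨?_, ?_, ?_⟩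
  · show (Algebra.TensorProduct.assoc k k k (A ⊗[k] B) (A ⊗[k] B) (A ⊗[k] B))
        ((Algebra.TensorProduct.map (Bialgebra.comulAlgHom k (A ⊗[k] B))
            (AlgHom.id k (A ⊗[k] B))) (twistIota (φ : A ⊗[k] B)) *
          (twistIota (φ : A ⊗[k] B) ⊗ₜ[k] (1 : A ⊗[k] B)))
      = (Algebra.TensorProduct.map (AlgHom.id k (A ⊗[k] B))
            (Bialgebra.comulAlgHom k (A ⊗[k] B))) (twistIota (φ : A ⊗[k] B)) *
          ((1 : A ⊗[k] B) ⊗ₜ[k] twistIota (φ : A ⊗[k] B))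
    rw [map_mul, twist_claim1, twist_claim2, hfacA, map_mul, twist_claim3, twist_claim4,
      twist_claim5, hfacB, map_mul, twist_claim6, twist_claim7, twist_claim8,
      mul_assoc, mul_assoc, ← twist_comm]
  · show (TensorProduct.lid k (A ⊗[k] B))
        ((TensorProduct.map (Coalgebra.counit : A ⊗[k] B →ₗ[k] k) LinearMap.id)
          (twistIota (φ : A ⊗[k] B))) = 1
    rw [twist_counit_left, hnormA, map_one]
  · show (TensorProduct.rid k (A ⊗[k] B))
        ((TensorProduct.map LinearMap.id (Coalgebra.counit : A ⊗[k] B →ₗ[k] k))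
          (twistIota (φ : A ⊗[k] B))) = 1
    rw [twist_counit_right, hnormB, map_one]
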